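/- For every λ > 0 and reals a < b, the Hyers–Ulam constant for x' = λx on [a,b] can be taken independent of b − a: if g : [a,b] → ℝ is C¹ with |g'(t) − λ g(t)| ≤ ε on [a,b], then the function z(t) := g(b) e^{λ(t−b)} satisfies |g(t) − z(t)| ≤ ε/λ for all t ∈ [a,b]. -/

import Mathlib

open Set

theorem stmt_14 (l a b ε : ℝ) (hl : 0 < l) (hab : a < b) (hε : 0 < ε)
    (g g' : ℝ → ℝ)
    (hg : ∀ t ∈ Icc a b, HasDerivAt g (g' t) t)
    (hg' : ContinuousOn g' (Icc a b))
    (happ : ∀ t ∈ Icc a b, |g' t - l * g t| ≤ ε) :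
    ∀ t ∈ Icc a b, |g t - g b * Real.exp (l * (t - b))| ≤ ε / l := by
  set E : ℝ → ℝ := fun s => Real.exp (-(l * s)) with hE
  have hEd : ∀ s : ℝ, HasDerivAt E (-l * E s) s := by
    intro s
    have h1 : HasDerivAt (fun t : ℝ => -(l * t)) (-l) s := by
      simpa using (hasDerivAt_id s).const_mul (-l)
    simpa [hE, mul_comm] using h1.exp
  -- derivative of h t := g t * E t on Icc
  have hhd : ∀ t ∈ Icc a b, HasDerivAt (fun s => g s * E s)
      ((g' t - l * g t) * E t) t := by
    intro t ht
    have := (hg t ht).mul (hEd t)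
    exact this.congr_deriv (by ring)
  have hEcont : Continuous E := by
    exact Real.continuous_exp.comp (by continuity)
  have hgc : ContinuousOn g (Icc a b) := fun t ht => (hg t ht).continuousAt.continuousWithinAt
  have hint : interior (Icc a b) = Ioo a b := interior_Icc
  -- monotone function χ
  have hmono : MonotoneOn (fun s => g s * E s - (ε / l) * E s) (Icc a b) := by
    apply monotoneOn_of_hasDerivWithinAt_nonneg (convex_Icc a b)
      ((hgc.mul hEcont.continuousOn).sub (continuousOn_const.mul hEcont.continuousOn))
      (f' := fun t => (g' t - l * g t + ε) * E t)
    · intro x hx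
      rw [hint] at hx
      have hx' : x ∈ Icc a b := Ioo_subset_Icc_self hx
      have h1 := hhd x hx'
      have h2 : HasDerivAt (fun s => (ε / l) * E s) ((ε / l) * (-l * E x)) x :=
        (hEd x).const_mul _
      have h3 := h1.sub h2
      have : (g' x - l * g x) * E x - ε / l * (-l * E x) = (g' x - l * g x + ε) * E x := by
        field_simp
        ring
      rw [this] at h3
      exact h3.hasDerivWithinAt
    · intro x hx
      rw [hint] at hx
      have hx' : x ∈ Icc a b := Ioo_subset_Icc_self hx
      have := abs_le.mp (happ x hx')
      have hEpos : 0 < E x := Real.exp_pos _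
      nlinarith [hEpos]
  have hanti : AntitoneOn (fun s => g s * E s + (ε / l) * E s) (Icc a b) := by
    apply antitoneOn_of_hasDerivWithinAt_nonpos (convex_Icc a b)
      ((hgc.mul hEcont.continuousOn).add (continuousOn_const.mul hEcont.continuousOn))
      (f' := fun t => (g' t - l * g t - ε) * E t)
    · intro x hx
      rw [hint] at hx
      have hx' : x ∈ Icc a b := Ioo_subset_Icc_self hx
      have h1 := hhd x hx'
      have h2 : HasDerivAt (fun s => (ε / l) * E s) ((ε / l) * (-l * E x)) x :=
        (hEd x).const_mul _
      have h3 := h1.add h2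
      have : (g' x - l * g x) * E x + ε / l * (-l * E x) = (g' x - l * g x - ε) * E x := by
        field_simp
        ring
      rw [this] at h3
      exact h3.hasDerivWithinAt
    · intro x hx
      rw [hint] at hx
      have hx' : x ∈ Icc a b := Ioo_subset_Icc_self hx
      have := abs_le.mp (happ x hx')
      have hEpos : 0 < E x := Real.exp_pos _
      nlinarith [hEpos]
  intro t ht
  have hb : b ∈ Icc a b := ⟨le_of_lt hab, le_refl b⟩
  have htb : t ≤ b := ht.2
  have h1 := hmono ht hb htb
  have h2 := hanti ht hb htb
  simp only at h1 h2
  -- key bounds on g t * E t - g b * E b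
  have hEt : 0 < E t := Real.exp_pos _
  have hEb : 0 < E b := Real.exp_pos _
  have hEtb : E b ≤ E t := by
    apply Real.exp_le_exp.mpr
    nlinarith
  have hexp : Real.exp (l * (t - b)) = E b / E t := by
    rw [hE]
    simp only
    rw [eq_div_iff (ne_of_gt hEt), ← Real.exp_add]
    ring_nf
  have hElt : Real.exp (l * t) * E t = 1 := by
    rw [hE, ← Real.exp_add]; simp
  rw [abs_le]
  constructor
  · -- from h2: g t * E t - g b * E b ≥ -(ε/l)*(E t - E b)
    have key : -(ε / l) * (E t - E b) ≤ g t * E t - g b * E b := by linarith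
    rw [hexp]
    have h3 : -(ε / l) * (E t - E b) * (E t)⁻¹ ≤ (g t * E t - g b * E b) * (E t)⁻¹ :=
      mul_le_mul_of_nonneg_right key (le_of_lt (inv_pos.mpr hEt))
    have h4 : (g t * E t - g b * E b) * (E t)⁻¹ = g t - g b * (E b / E t) := by
      field_simp
    rw [h4] at h3
    have h5 : -(ε / l) ≤ -(ε / l) * (E t - E b) * (E t)⁻¹ := by
      have hεl : 0 < ε / l := div_pos hε hl
      have h6 : (E t - E b) * (E t)⁻¹ ≤ 1 := by
        rw [sub_mul, mul_inv_cancel₀ (ne_of_gt hEt)]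
        nlinarith [mul_pos hEb (inv_pos.mpr hEt)]
      nlinarith [mul_nonneg (sub_nonneg.mpr hEtb) (le_of_lt (inv_pos.mpr hEt))]
    linarith
  · have key : g t * E t - g b * E b ≤ (ε / l) * (E t - E b) := by linarith
    rw [hexp]
    rw [le_div_iff₀ hl]
    have := mul_le_mul_of_nonneg_right key (le_of_lt (inv_pos.mpr hEt))
    have h4 : (g t * E t - g b * E b) * (E t)⁻¹ = g t - g b * (E b / E t) := by
      field_simp
    rw [h4] at this
    have h5 : (ε / l) * (E t - E b) * (E t)⁻¹ ≤ ε / l := by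
      rw [mul_assoc]
      have : (E t - E b) * (E t)⁻¹ = 1 - E b / E t := by field_simp
      rw [this]
      nlinarith [div_nonneg (le_of_lt hEb) (le_of_lt hEt), div_pos hε hl]
    have : g t - g b * (E b / E t) ≤ ε / l := le_trans this h5
    calc (g t - g b * (E b / E t)) * l ≤ (ε / l) * l := by
          apply mul_le_mul_of_nonneg_right this (le_of_lt hl)
      _ = ε := by field_simp
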